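/- Let S be a local ring with involution * in which 2 is a unit, and let A = M(m,S) with the induced involution (conjugate transpose). If a, c ∈ A satisfy Aa + Ac = A and a*c = c*a, then there exists a *-symmetric r ∈ A (r* = r) such that a + rc is a unit of A. -/

import Mathlib

open Matrix

section LocalFacts

variable {S : Type*} [Ring S] [IsLocalRing S]

/-- In a (possibly noncommutative) local ring, a left-invertible element is a unit. -/
lemma aux_isUnit_of_left_inv {s t : S} (h : t * s = 1) : IsUnit s := by
  rcases IsLocalRing.isUnit_or_isUnit_of_add_one
      (a := s * t) (b := 1 - s * t) (by abel) with he | he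
  · obtain ⟨u, hu⟩ := he
    have hid : (s * t) * (s * t) = s * t := by
      calc (s * t) * (s * t) = s * (t * s) * t := by noncomm_ring
        _ = s * t := by rw [h]; noncomm_ring
    have h1 : s * t = 1 := by
      have := congrArg (fun z => (↑u⁻¹ : S) * z) hid
      simpa [← hu, ← mul_assoc] using this
    exact isUnit_iff_exists.2 ⟨t, h1, h⟩
  · have h0 : (1 - s * t) * s = 0 := by
      have : (1 - s * t) * s = s - s * (t * s) := by noncomm_ring
      rw [this, h, mul_one, sub_self]
    have hs0 : s = 0 := by
      obtain ⟨u, hu⟩ := he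
      have := congrArg (fun z => (↑u⁻¹ : S) * z) h0
      simpa [← hu, ← mul_assoc] using this
    exfalso
    have : (1 : S) = 0 := by rw [← h, hs0, mul_zero]
    exact one_ne_zero this

lemma aux_isUnit_of_isUnit_mul_left {x s : S} (h : IsUnit (x * s)) : IsUnit s := by
  obtain ⟨u, hu⟩ := h
  refine aux_isUnit_of_left_inv (t := (↑u⁻¹ : S) * x) ?_
  rw [mul_assoc, ← hu, Units.inv_mul]

lemma aux_isUnit_or_of_isUnit_add {a b : S} (h : IsUnit (a + b)) : IsUnit a ∨ IsUnit b := by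
  obtain ⟨u, hu⟩ := h
  have h1 : (↑u⁻¹ : S) * a + (↑u⁻¹ : S) * b = 1 := by
    rw [← mul_add, ← hu, Units.inv_mul]
  rcases IsLocalRing.isUnit_or_isUnit_of_add_one h1 with h' | h'
  · exact Or.inl (aux_isUnit_of_isUnit_mul_left h')
  · exact Or.inr (aux_isUnit_of_isUnit_mul_left h')

lemma aux_exists_isUnit_of_sum {ι : Type*} (s : Finset ι) (f : ι → S)
    (h : IsUnit (∑ i ∈ s, f i)) : ∃ i ∈ s, IsUnit (f i) := by
  classical
  induction s using Finset.cons_induction with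
  | empty =>
      simp only [Finset.sum_empty] at h
      exact absurd (isUnit_zero_iff.1 h).symm one_ne_zero
  | cons i s hi ih =>
      rw [Finset.sum_cons] at h
      rcases aux_isUnit_or_of_isUnit_add h with h' | h'
      · exact ⟨i, Finset.mem_cons_self i s, h'⟩
      · obtain ⟨j, hj, hj'⟩ := ih h'
        exact ⟨j, Finset.mem_cons_of_mem hj, hj'⟩

end LocalFacts

section Blocks

variable {S : Type*} [Ring S]

lemma aux_isUnit_fin1 {α : Matrix (Fin 1) (Fin 1) S} (h : IsUnit (α 0 0)) : IsUnit α := by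
  obtain ⟨u, hu⟩ := h
  refine isUnit_iff_exists.2 ⟨Matrix.of (fun _ _ => (↑u⁻¹ : S)), ?_, ?_⟩ <;>
  · ext i j
    fin_cases i; fin_cases j
    simp [Matrix.mul_apply, Fin.sum_univ_one, ← hu, Matrix.one_apply]

variable {n p : Type*} [Fintype n] [Fintype p] [DecidableEq n] [DecidableEq p]

lemma aux_isUnit_fromBlocks_lower {A : Matrix n n S} {D : Matrix p p S}
    (X : Matrix p n S) (hA : IsUnit A) (hD : IsUnit D) :
    IsUnit (fromBlocks A 0 X D) := by
  obtain ⟨A', hAA', hA'A⟩ := isUnit_iff_exists.1 hA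
  obtain ⟨D', hDD', hD'D⟩ := isUnit_iff_exists.1 hD
  refine isUnit_iff_exists.2 ⟨fromBlocks A' 0 (-(D' * X * A')) D', ?_, ?_⟩
  · rw [fromBlocks_multiply]
    have h21 : X * A' + D * -(D' * X * A') = 0 := by
      simp only [Matrix.mul_neg, ← Matrix.mul_assoc, hDD', Matrix.one_mul, add_neg_cancel]
    simp only [Matrix.zero_mul, Matrix.mul_zero, add_zero, zero_add, hAA', hDD', h21]
    exact fromBlocks_one
  · rw [fromBlocks_multiply]
    have h21 : -(D' * X * A') * A + D' * X = 0 := by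
      simp only [Matrix.neg_mul, Matrix.mul_assoc, hA'A, Matrix.mul_one, neg_add_cancel]
    simp only [Matrix.zero_mul, Matrix.mul_zero, add_zero, zero_add, hA'A, hD'D, h21]
    exact fromBlocks_one

lemma aux_isUnit_fromBlocks_upper {A : Matrix n n S} {D : Matrix p p S}
    (B : Matrix n p S) (hA : IsUnit A) (hD : IsUnit D) :
    IsUnit (fromBlocks A B 0 D) := by
  obtain ⟨A', hAA', hA'A⟩ := isUnit_iff_exists.1 hA
  obtain ⟨D', hDD', hD'D⟩ := isUnit_iff_exists.1 hD
  refine isUnit_iff_exists.2 ⟨fromBlocks A' (-(A' * B * D')) 0 D', ?_, ?_⟩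
  · rw [fromBlocks_multiply]
    have h12 : A * -(A' * B * D') + B * D' = 0 := by
      simp only [Matrix.mul_neg, ← Matrix.mul_assoc, hAA', Matrix.one_mul, neg_add_cancel]
    simp only [Matrix.zero_mul, Matrix.mul_zero, add_zero, zero_add, hAA', hDD', h12]
    exact fromBlocks_one
  · rw [fromBlocks_multiply]
    have h12 : A' * B + -(A' * B * D') * D = 0 := by
      simp only [Matrix.neg_mul, Matrix.mul_assoc, hD'D, Matrix.mul_one, add_neg_cancel]
    simp only [Matrix.zero_mul, Matrix.mul_zero, add_zero, zero_add, hA'A, hD'D, h12]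
    exact fromBlocks_one

end Blocks

section Pivot

variable {S : Type*} [Ring S] {κ : Type*} [Fintype κ] [DecidableEq κ]

lemma aux_pivot (M : Matrix (Fin 1 ⊕ κ) (Fin 1 ⊕ κ) S) (j : Fin 1 ⊕ κ)
    (hj : IsUnit (M j (Sum.inl 0))) :
    ∃ (u g : Matrix (Fin 1 ⊕ κ) (Fin 1 ⊕ κ) S) (M' : Matrix κ κ S),
      IsUnit u ∧ IsUnit g ∧ u * M * g = fromBlocks 1 0 0 M' := by
  classical
  set σ : Equiv.Perm (Fin 1 ⊕ κ) := Equiv.swap j (Sum.inl 0) with hσ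
  set P : Matrix (Fin 1 ⊕ κ) (Fin 1 ⊕ κ) S :=
    (1 : Matrix (Fin 1 ⊕ κ) (Fin 1 ⊕ κ) S).submatrix σ (Equiv.refl _) with hP
  have hPmul : ∀ N : Matrix (Fin 1 ⊕ κ) (Fin 1 ⊕ κ) S, P * N = N.submatrix σ id := by
    intro N
    rw [hP, Matrix.one_submatrix_mul]
    rfl
  have hσσ : (⇑σ ∘ ⇑σ) = id := by
    funext z
    simp [hσ, Function.comp, Equiv.swap_apply_self]
  have hPP : P * P = 1 := by
    rw [hPmul, hP, Matrix.submatrix_submatrix]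
    simp only [hσσ]
    simp
  have hPunit : IsUnit P := isUnit_iff_exists.2 ⟨P, hPP, hPP⟩
  set M1 : Matrix (Fin 1 ⊕ κ) (Fin 1 ⊕ κ) S := M.submatrix σ id with hM1
  set α := M1.toBlocks₁₁ with hα
  set β := M1.toBlocks₁₂ with hβ
  set γ := M1.toBlocks₂₁ with hγ
  set δ := M1.toBlocks₂₂ with hδ
  have hsplit : fromBlocks α β γ δ = M1 := fromBlocks_toBlocks M1
  have hα00 : IsUnit (α 0 0) := by
    have : α 0 0 = M j (Sum.inl 0) := by
      simp [hα, Matrix.toBlocks₁₁, hM1, hσ, Matrix.submatrix_apply, Equiv.swap_apply_right]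
    rw [this]; exact hj
  obtain ⟨w, hw1, hw2⟩ := isUnit_iff_exists.1 (aux_isUnit_fin1 hα00)
  set u0 : Matrix (Fin 1 ⊕ κ) (Fin 1 ⊕ κ) S := fromBlocks w 0 (-(γ * w)) 1 with hu0
  set g0 : Matrix (Fin 1 ⊕ κ) (Fin 1 ⊕ κ) S := fromBlocks 1 (-(w * β)) 0 1 with hg0
  have hu0unit : IsUnit u0 :=
    aux_isUnit_fromBlocks_lower _ (isUnit_iff_exists.2 ⟨α, hw2, hw1⟩) isUnit_one
  have hg0unit : IsUnit g0 :=
    aux_isUnit_fromBlocks_upper _ isUnit_one isUnit_one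
  refine ⟨u0 * P, g0, -(γ * (w * β)) + δ, hu0unit.mul hPunit, hg0unit, ?_⟩
  rw [Matrix.mul_assoc u0 P M, hPmul M, ← hM1, ← hsplit, hu0, hg0]
  rw [fromBlocks_multiply, fromBlocks_multiply]
  simp only [Matrix.neg_mul, Matrix.mul_neg, Matrix.mul_assoc, hw2, Matrix.mul_one,
    Matrix.one_mul, Matrix.zero_mul, Matrix.mul_zero, add_zero, zero_add, neg_add_cancel, neg_zero]

end Pivot
section Transfer

variable {S : Type*} [Ring S] [StarRing S] {ι : Type} [Fintype ι] [DecidableEq ι]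

lemma aux_transfer (a c u u' g g' R : Matrix ι ι S)
    (huu' : u * u' = 1) (hu'u : u' * u = 1) (hgg' : g * g' = 1) (hg'g : g' * g = 1)
    (hR : star R = R) (h : IsUnit (u * a * g + R * (star u' * c * g))) :
    ∃ r : Matrix ι ι S, star r = r ∧ IsUnit (a + r * c) := by
  refine ⟨u' * R * star u', by simp [Matrix.star_mul, star_star, hR, Matrix.mul_assoc], ?_⟩
  have key : a + (u' * R * star u') * c = u' * ((u * a * g + R * (star u' * c * g)) * g') := by
    rw [Matrix.add_mul, Matrix.mul_add]
    have e1 : u' * (u * a * g * g') = a := by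
      rw [Matrix.mul_assoc (u * a) g g', hgg', Matrix.mul_one, ← Matrix.mul_assoc, hu'u,
        Matrix.one_mul]
    have e2 : u' * (R * (star u' * c * g) * g') = u' * R * star u' * c := by
      simp only [← Matrix.mul_assoc]
      rw [Matrix.mul_assoc _ g g', hgg', Matrix.mul_one]
    rw [e1, e2]
  rw [key]
  have hu' : IsUnit u' := isUnit_iff_exists.2 ⟨u, hu'u, huu'⟩
  have hg' : IsUnit g' := isUnit_iff_exists.2 ⟨g, hg'g, hgg'⟩
  exact hu'.mul (h.mul hg')

/-- transport of the hypotheses under the transformation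
`(a, c) ↦ (u a g, (u*)⁻¹ c g)`. -/
lemma aux_conj (a c u u' g g' : Matrix ι ι S)
    (huu' : u * u' = 1) (hu'u : u' * u = 1) (hgg' : g * g' = 1) (hg'g : g' * g = 1)
    (hac : star a * c = star c * a) (x y : Matrix ι ι S) (hxy : x * a + y * c = 1) :
    star (u * a * g) * (star u' * c * g) = star (star u' * c * g) * (u * a * g) ∧
      (g' * x * u') * (u * a * g) + (g' * y * star u) * (star u' * c * g) = 1 := by
  have hsu : star u * star u' = 1 := by rw [← Matrix.star_mul, hu'u, star_one]
  have hsu' : star u' * star u = 1 := by rw [← Matrix.star_mul, huu', star_one]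
  have hz1 : ∀ Z : Matrix ι ι S, Z * star u * star u' = Z := fun Z => by
    rw [Matrix.mul_assoc, hsu, Matrix.mul_one]
  have hz2 : ∀ Z : Matrix ι ι S, Z * u' * u = Z := fun Z => by
    rw [Matrix.mul_assoc, hu'u, Matrix.mul_one]
  constructor
  · have l1 : star (u * a * g) * (star u' * c * g) = star g * star a * c * g := by
      simp only [Matrix.star_mul, ← Matrix.mul_assoc]
      rw [hz1]
    have l2 : star (star u' * c * g) * (u * a * g) = star g * star c * a * g := by
      simp only [Matrix.star_mul, star_star, ← Matrix.mul_assoc]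
      rw [hz2]
    rw [l1, l2, Matrix.mul_assoc (star g) (star a) c, hac, ← Matrix.mul_assoc]
  · have l3 : g' * x * u' * (u * a * g) = g' * (x * a) * g := by
      simp only [← Matrix.mul_assoc]
      rw [hz2]
    have l4 : g' * y * star u * (star u' * c * g) = g' * (y * c) * g := by
      simp only [← Matrix.mul_assoc]
      rw [hz1]
    rw [l3, l4, ← Matrix.add_mul, ← Matrix.mul_add, hxy, Matrix.mul_one, hg'g]

end Transfer
section Main

variable (S : Type*) [Ring S] [StarRing S]

def AuxStmt (ι : Type) [Fintype ι] [DecidableEq ι] : Prop :=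
  ∀ a c : Matrix ι ι S, (∃ x y : Matrix ι ι S, x * a + y * c = 1) →
    star a * c = star c * a → ∃ r : Matrix ι ι S, star r = r ∧ IsUnit (a + r * c)

variable {S}

lemma aux_stmt_equiv {ι κ : Type} [Fintype ι] [DecidableEq ι] [Fintype κ] [DecidableEq κ]
    (e : ι ≃ κ) (h : AuxStmt S κ) : AuxStmt S ι := by
  intro a c hco hac
  obtain ⟨x, y, hxy⟩ := hco
  set f : Matrix ι ι S → Matrix κ κ S := fun M => M.submatrix ⇑e.symm ⇑e.symm with hf
  have hmul : ∀ M N : Matrix ι ι S, f (M * N) = f M * f N := fun M N =>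
    (Matrix.submatrix_mul_equiv M N _ e.symm _).symm
  have hadd : ∀ M N : Matrix ι ι S, f (M + N) = f M + f N := by
    intro M N; ext i j; simp [hf]
  have hone : f 1 = 1 := Matrix.submatrix_one_equiv e.symm
  have hstar : ∀ M : Matrix ι ι S, f (star M) = star (f M) := by
    intro M; ext i j
    simp [hf, Matrix.star_eq_conjTranspose, Matrix.conjTranspose_apply]
  have finj : Function.Injective f := by
    intro M N hMN
    ext i j
    have := congrFun (congrFun hMN (e i)) (e j)
    simpa [hf] using this
  obtain ⟨R, hR, hRu⟩ := h (f a) (f c)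
    ⟨f x, f y, by rw [← hmul, ← hmul, ← hadd, hxy, hone]⟩
    (by rw [← hstar, ← hstar, ← hmul, ← hmul, hac])
  have hfr : f (R.submatrix ⇑e ⇑e) = R := by
    simp [hf, Matrix.submatrix_submatrix, Equiv.self_comp_symm]
  refine ⟨R.submatrix ⇑e ⇑e, ?_, ?_⟩
  · apply finj
    rw [hstar, hfr, hR]
  · have hball : f (a + R.submatrix ⇑e ⇑e * c) = f a + R * f c := by
      rw [hadd, hmul, hfr]
    obtain ⟨V, hV1, hV2⟩ := isUnit_iff_exists.1 (show IsUnit (f (a + R.submatrix ⇑e ⇑e * c)) by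
      rw [hball]; exact hRu)
    refine isUnit_iff_exists.2 ⟨V.submatrix ⇑e ⇑e, finj ?_, finj ?_⟩
    · have hfV : f (V.submatrix ⇑e ⇑e) = V := by
        simp [hf, Matrix.submatrix_submatrix, Equiv.self_comp_symm]
      rw [hmul, hfV, hV1, hone]
    · have hfV : f (V.submatrix ⇑e ⇑e) = V := by
        simp [hf, Matrix.submatrix_submatrix, Equiv.self_comp_symm]
      rw [hmul, hfV, hV2, hone]

end Main
section Step

variable {S : Type*} [Ring S] [StarRing S] [IsLocalRing S]

lemma aux_step {κ : Type} [Fintype κ] [DecidableEq κ] (IH : AuxStmt S κ) :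
    AuxStmt S (Fin 1 ⊕ κ) := by
  intro a c hco hac
  obtain ⟨x, y, hxy⟩ := hco
  classical
  -- find a pivot in the first column of `a` or of `c`
  have h1 : (∑ k : Fin 1 ⊕ κ,
      (x (Sum.inl 0) k * a k (Sum.inl 0) + y (Sum.inl 0) k * c k (Sum.inl 0))) = 1 := by
    have h := congrFun (congrFun hxy (Sum.inl 0)) (Sum.inl 0)
    simpa [Matrix.add_apply, Matrix.mul_apply, Matrix.one_apply,
      Finset.sum_add_distrib] using h
  obtain ⟨k, -, hk⟩ := aux_exists_isUnit_of_sum Finset.univ _ (h1 ▸ isUnit_one)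
  have hpiv : IsUnit (a k (Sum.inl 0)) ∨ IsUnit (c k (Sum.inl 0)) := by
    rcases aux_isUnit_or_of_isUnit_add hk with h | h
    exacts [Or.inl (aux_isUnit_of_isUnit_mul_left h), Or.inr (aux_isUnit_of_isUnit_mul_left h)]
  rcases hpiv with hpa | hpc
  · -- pivot in `a`
    obtain ⟨u, g, a', hu, hg, hQ⟩ := aux_pivot a k hpa
    obtain ⟨u', huu', hu'u⟩ := isUnit_iff_exists.1 hu
    obtain ⟨g', hgg', hg'g⟩ := isUnit_iff_exists.1 hg
    obtain ⟨hherm, hunim⟩ := aux_conj a c u u' g g' huu' hu'u hgg' hg'g hac x y hxy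
    rw [hQ] at hherm hunim
    set C : Matrix (Fin 1 ⊕ κ) (Fin 1 ⊕ κ) S := star u' * c * g with hC
    set X : Matrix (Fin 1 ⊕ κ) (Fin 1 ⊕ κ) S := g' * x * u' with hX
    set Y : Matrix (Fin 1 ⊕ κ) (Fin 1 ⊕ κ) S := g' * y * star u with hY
    have hCsplit : Matrix.fromBlocks C.toBlocks₁₁ C.toBlocks₁₂ C.toBlocks₂₁ C.toBlocks₂₂ = C :=
      Matrix.fromBlocks_toBlocks C
    set γ := C.toBlocks₁₁ with hγ
    set c12 := C.toBlocks₁₂ with hc12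
    set c21 := C.toBlocks₂₁ with hc21
    set c22 := C.toBlocks₂₂ with hc22
    -- block form of the hermitian condition
    rw [← hCsplit] at hherm
    rw [Matrix.star_eq_conjTranspose, Matrix.star_eq_conjTranspose,
      Matrix.fromBlocks_conjTranspose, Matrix.fromBlocks_conjTranspose,
      Matrix.fromBlocks_multiply, Matrix.fromBlocks_multiply] at hherm
    simp only [Matrix.conjTranspose_one, Matrix.conjTranspose_zero, Matrix.one_mul,
      Matrix.zero_mul, Matrix.mul_zero, Matrix.mul_one, add_zero, zero_add] at hherm
    have h12 : c12 = c21ᴴ * a' := by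
      simpa [Matrix.toBlocks_fromBlocks₁₂] using congrArg Matrix.toBlocks₁₂ hherm
    have h22 : a'ᴴ * c22 = c22ᴴ * a' := by
      simpa [Matrix.toBlocks_fromBlocks₂₂] using congrArg Matrix.toBlocks₂₂ hherm
    -- block form of the unimodularity condition
    have hXs := Matrix.fromBlocks_toBlocks X
    have hYs := Matrix.fromBlocks_toBlocks Y
    rw [← hCsplit, ← hXs, ← hYs, Matrix.fromBlocks_multiply, Matrix.fromBlocks_multiply,
      Matrix.fromBlocks_add, ← Matrix.fromBlocks_one] at hunim
    have h22eq := congrArg Matrix.toBlocks₂₂ hunim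
    simp only [Matrix.toBlocks_fromBlocks₂₂, Matrix.mul_zero, Matrix.mul_one, add_zero,
      zero_add] at h22eq
    -- h22eq : X₂₂ * a' + (Y₂₁ * c12 + Y₂₂ * c22) = 1
    have hunim' : (X.toBlocks₂₂ + Y.toBlocks₂₁ * c21ᴴ) * a' + Y.toBlocks₂₂ * c22 = 1 := by
      rw [Matrix.add_mul, Matrix.mul_assoc, ← h12, add_assoc]
      exact h22eq
    obtain ⟨s, hs, hsu⟩ := IH a' c22 ⟨_, _, hunim'⟩
      (by simpa [Matrix.star_eq_conjTranspose] using h22)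
    have hs' : sᴴ = s := by rw [← Matrix.star_eq_conjTranspose]; exact hs
    set R : Matrix (Fin 1 ⊕ κ) (Fin 1 ⊕ κ) S := Matrix.fromBlocks 0 0 0 s with hR
    have hRst : star R = R := by
      simp only [hR, Matrix.star_eq_conjTranspose, Matrix.fromBlocks_conjTranspose,
        Matrix.conjTranspose_zero, hs']
    refine aux_transfer a c u u' g g' R huu' hu'u hgg' hg'g hRst ?_
    rw [hQ, ← hC, ← hCsplit, hR, Matrix.fromBlocks_multiply, Matrix.fromBlocks_add]
    simp only [Matrix.zero_mul, add_zero, zero_add]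
    exact aux_isUnit_fromBlocks_lower _ isUnit_one hsu
  · -- pivot in `c`
    obtain ⟨v, g, c', hv, hg, hQ⟩ := aux_pivot c k hpc
    obtain ⟨v', hvv', hv'v⟩ := isUnit_iff_exists.1 hv
    obtain ⟨g', hgg', hg'g⟩ := isUnit_iff_exists.1 hg
    have huu' : star v' * star v = 1 := by rw [← Matrix.star_mul, hvv', star_one]
    have hu'u : star v * star v' = 1 := by rw [← Matrix.star_mul, hv'v, star_one]
    obtain ⟨hherm, hunim⟩ :=
      aux_conj a c (star v') (star v) g g' huu' hu'u hgg' hg'g hac x y hxy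
    simp only [star_star] at hherm hunim
    rw [hQ] at hherm hunim
    set A : Matrix (Fin 1 ⊕ κ) (Fin 1 ⊕ κ) S := star v' * a * g with hA
    set X : Matrix (Fin 1 ⊕ κ) (Fin 1 ⊕ κ) S := g' * x * star v with hX
    set Y : Matrix (Fin 1 ⊕ κ) (Fin 1 ⊕ κ) S := g' * y * v' with hY
    have hAsplit : Matrix.fromBlocks A.toBlocks₁₁ A.toBlocks₁₂ A.toBlocks₂₁ A.toBlocks₂₂ = A :=
      Matrix.fromBlocks_toBlocks A
    set α := A.toBlocks₁₁ with hα'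
    set a12 := A.toBlocks₁₂ with ha12
    set a21 := A.toBlocks₂₁ with ha21
    set a22 := A.toBlocks₂₂ with ha22
    rw [← hAsplit] at hherm
    rw [Matrix.star_eq_conjTranspose, Matrix.star_eq_conjTranspose,
      Matrix.fromBlocks_conjTranspose, Matrix.fromBlocks_conjTranspose,
      Matrix.fromBlocks_multiply, Matrix.fromBlocks_multiply] at hherm
    simp only [Matrix.conjTranspose_one, Matrix.conjTranspose_zero, Matrix.one_mul,
      Matrix.zero_mul, Matrix.mul_zero, Matrix.mul_one, add_zero, zero_add] at hherm
    have hαh : αᴴ = α := by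
      simpa [Matrix.toBlocks_fromBlocks₁₁] using congrArg Matrix.toBlocks₁₁ hherm
    have h12 : a21ᴴ * c' = a12 := by
      simpa [Matrix.toBlocks_fromBlocks₁₂] using congrArg Matrix.toBlocks₁₂ hherm
    have h22 : a22ᴴ * c' = c'ᴴ * a22 := by
      simpa [Matrix.toBlocks_fromBlocks₂₂] using congrArg Matrix.toBlocks₂₂ hherm
    have hXs := Matrix.fromBlocks_toBlocks X
    have hYs := Matrix.fromBlocks_toBlocks Y
    rw [← hAsplit, ← hXs, ← hYs, Matrix.fromBlocks_multiply, Matrix.fromBlocks_multiply,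
      Matrix.fromBlocks_add, ← Matrix.fromBlocks_one] at hunim
    have h22eq := congrArg Matrix.toBlocks₂₂ hunim
    simp only [Matrix.toBlocks_fromBlocks₂₂, Matrix.mul_zero, Matrix.mul_one, add_zero,
      zero_add] at h22eq
    -- h22eq : (X₂₁ * a12 + X₂₂ * a22) + Y₂₂ * c' = 1
    have hunim' : X.toBlocks₂₂ * a22 + (X.toBlocks₂₁ * a21ᴴ + Y.toBlocks₂₂) * c' = 1 := by
      rw [Matrix.add_mul, Matrix.mul_assoc, h12]
      rw [← h22eq]
      abel
    obtain ⟨s, hs, hsu⟩ := IH a22 c' ⟨_, _, hunim'⟩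
      (by simpa [Matrix.star_eq_conjTranspose] using h22)
    have hs' : sᴴ = s := by rw [← Matrix.star_eq_conjTranspose]; exact hs
    set R : Matrix (Fin 1 ⊕ κ) (Fin 1 ⊕ κ) S :=
      Matrix.fromBlocks (1 - α) 0 0 (s + a21 * a21ᴴ) with hR
    have hRst : star R = R := by
      simp only [hR, Matrix.star_eq_conjTranspose, Matrix.fromBlocks_conjTranspose,
        Matrix.conjTranspose_zero, Matrix.conjTranspose_sub, Matrix.conjTranspose_one,
        Matrix.conjTranspose_add, Matrix.conjTranspose_mul, Matrix.conjTranspose_conjTranspose,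
        hαh, hs']
    refine aux_transfer a c (star v') (star v) g g' R huu' hu'u hgg' hg'g hRst ?_
    rw [star_star, hQ, ← hA, ← hAsplit, hR]
    have hfact : Matrix.fromBlocks α a12 a21 a22 +
        Matrix.fromBlocks (1 - α) 0 0 (s + a21 * a21ᴴ) * Matrix.fromBlocks 1 0 0 c'
        = Matrix.fromBlocks 1 0 a21 1 * Matrix.fromBlocks 1 a12 0 (a22 + s * c') := by
      rw [Matrix.fromBlocks_multiply, Matrix.fromBlocks_multiply, Matrix.fromBlocks_add]
      simp only [Matrix.mul_one, Matrix.mul_zero, Matrix.zero_mul, Matrix.one_mul,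
        add_zero, zero_add]
      rw [Matrix.fromBlocks_inj]
      refine ⟨by abel, rfl, rfl, ?_⟩
      rw [Matrix.add_mul, Matrix.mul_assoc a21, h12]
      abel
    rw [hfact]
    exact (aux_isUnit_fromBlocks_lower _ isUnit_one isUnit_one).mul
      (aux_isUnit_fromBlocks_upper _ isUnit_one hsu)

end Step

section Conclusion

variable {S : Type*} [Ring S] [StarRing S] [IsLocalRing S]

lemma aux_stmt_fin : ∀ m : ℕ, AuxStmt S (Fin m) := by
  intro m
  induction m with
  | zero =>
      intro a c _ _
      refine ⟨0, star_zero _, ?_⟩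
      have : a + 0 * c = 1 := Subsingleton.elim _ _
      rw [this]; exact isUnit_one
  | succ n ih =>
      exact aux_stmt_equiv ((finCongr (Nat.add_comm n 1)).trans finSumFinEquiv.symm)
        (aux_step ih)

end Conclusion

/-- `S` local with involution, `2 ∈ S^×`, `A = M(m,S)` with conjugate
transpose involution.  If `Aa + Ac = A` and `a* c = c* a` then there is a `*`-symmetric
`r ∈ A` with `a + r c` a unit. -/
theorem stmt4 {S : Type*} [Ring S] [StarRing S] [IsLocalRing S]
    (h2 : IsUnit (2 : S)) (m : ℕ) (a c : Matrix (Fin m) (Fin m) S)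
    (hcoprime : ∃ x y : Matrix (Fin m) (Fin m) S, x * a + y * c = 1)
    (hac : star a * c = star c * a) :
    ∃ r : Matrix (Fin m) (Fin m) S, star r = r ∧ IsUnit (a + r * c) :=
  aux_stmt_fin m a c hcoprime hac
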